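/- Let (X,μ) be a σ-finite measure space, B a Banach space, and Φ₁ : [0,∞) → [0,∞) defined by Φ₁(x) = x² for 0 ≤ x ≤ 1 and Φ₁(x) = 2x − 1 for x > 1. For a strongly measurable f : X → B define the Luxemburg norm ‖f‖_{Φ₁} = inf{ k > 0 : ∫_X Φ₁(‖f(x)‖_B / k) dμ(x) ≤ 1 } (inf ∅ = ∞), and let A(f) = inf{ ‖g‖_{L¹(X,B)} + ‖h‖_{L²(X,B)} : f = g + h a.e., g ∈ L¹(X,B), h ∈ L²(X,B) } (inf ∅ = ∞). Then (1/2)·A(f) ≤ ‖f‖_{Φ₁} ≤ 2·A(f). -/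

import Mathlib

open MeasureTheory
open scoped ENNReal

/-- The Orlicz function `Φ₁(x) = x²` for `0 ≤ x ≤ 1`, `Φ₁(x) = 2x − 1` for `x > 1`. -/
noncomputable def Phi1 (x : ℝ) : ℝ := if x ≤ 1 then x ^ 2 else 2 * x - 1

/-- The Luxemburg norm associated with `Φ₁` (with `inf ∅ = ∞`). -/
noncomputable def luxNorm {X B : Type*} [MeasurableSpace X] [NormedAddCommGroup B]
    (μ : Measure X) (f : X → B) : ℝ≥0∞ :=
  sInf {k : ℝ≥0∞ | 0 < k ∧ k ≠ ⊤ ∧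
    ∫⁻ x, ENNReal.ofReal (Phi1 (‖f x‖ / k.toReal)) ∂μ ≤ 1}

/-- The `L¹ + L²` decomposition quantity `A(f)` (with `inf ∅ = ∞`). -/
noncomputable def sumL1L2 {X B : Type*} [MeasurableSpace X] [NormedAddCommGroup B]
    (μ : Measure X) (f : X → B) : ℝ≥0∞ :=
  sInf {r : ℝ≥0∞ | ∃ g h : X → B, Integrable g μ ∧ MemLp h 2 μ ∧ f =ᵐ[μ] g + h ∧
    r = ENNReal.ofReal ((∫ x, ‖g x‖ ∂μ) + Real.sqrt (∫ x, ‖h x‖ ^ 2 ∂μ))}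

lemma phi1_nonneg {t : ℝ} (ht : 0 ≤ t) : 0 ≤ Phi1 t := by
  unfold Phi1; split_ifs with h
  · positivity
  · nlinarith

lemma le_phi1 {t : ℝ} (ht : 1 ≤ t) : t ≤ Phi1 t := by
  unfold Phi1; split_ifs with h
  · nlinarith
  · linarith

lemma phi1_le {t u v : ℝ} (ht : 0 ≤ t) (hu : 0 ≤ u) (hv : 0 ≤ v) (htuv : t ≤ u + v) :
    Phi1 t ≤ 2 * u + v ^ 2 := by
  unfold Phi1; split_ifs with h
  · rcases le_or_gt (u + 2 * v) 2 with h2 | h2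
    · nlinarith [mul_nonneg hu (sub_nonneg.2 h2), mul_le_mul htuv htuv ht (add_nonneg hu hv)]
    · rcases le_or_gt 1 v with h3 | h3
      · nlinarith
      · nlinarith [sq_nonneg (2 - v)]
  · nlinarith [sq_nonneg (v - 1)]

lemma luxNorm_of_ae_zero {X B : Type*} [MeasurableSpace X] [NormedAddCommGroup B]
    (μ : Measure X) {f : X → B} (hf0 : f =ᵐ[μ] 0) : luxNorm μ f = 0 := by
  refine le_antisymm ?_ zero_le
  refine ENNReal.le_of_forall_pos_le_add fun ε hε _ => ?_
  rw [zero_add]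
  refine sInf_le ⟨by exact_mod_cast hε, ENNReal.coe_ne_top, ?_⟩
  have hz : ∀ᵐ x ∂μ,
      ENNReal.ofReal (Phi1 (‖f x‖ / (ε : ℝ≥0∞).toReal)) = 0 := by
    filter_upwards [hf0] with x hx
    have : f x = 0 := hx
    simp [this, Phi1]
  rw [lintegral_congr_ae hz, lintegral_zero]
  exact zero_le_one

/-- Lemma `whatever`: the Luxemburg norm `‖f‖_{Φ₁}` is equivalent, with
constants `1/2` and `2`, to the infimum of `‖g‖_{L¹} + ‖h‖_{L²}` over decompositions
`f = g + h`. -/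
theorem stmt16 {X : Type*} [MeasurableSpace X] (μ : Measure X) [SigmaFinite μ]
    {B : Type*} [NormedAddCommGroup B] [NormedSpace ℝ B] [CompleteSpace B]
    (f : X → B) (hf : StronglyMeasurable f) :
    (1 / 2 : ℝ≥0∞) * sumL1L2 μ f ≤ luxNorm μ f ∧ luxNorm μ f ≤ 2 * sumL1L2 μ f := by
  constructor
  · -- `(1/2) A(f) ≤ ‖f‖_Φ₁`
    rw [luxNorm]
    refine le_sInf fun k hk => ?_
    obtain ⟨hk0, hktop, hkI⟩ := hk
    set c : ℝ := k.toReal with hc_def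
    have hc : 0 < c := ENNReal.toReal_pos hk0.ne' hktop
    set S : Set X := {x | c < ‖f x‖} with hS_def
    have hS : MeasurableSet S := measurableSet_lt measurable_const hf.norm.measurable
    set g : X → B := S.indicator f with hg_def
    set h : X → B := Sᶜ.indicator f with hh_def
    have hgm : StronglyMeasurable g := hf.indicator hS
    have hhm : StronglyMeasurable h := hf.indicator hS.compl
    have key1 : ∀ x, ‖g x‖ ≤ c * Phi1 (‖f x‖ / c) := by
      intro x
      by_cases hx : x ∈ S
      · have hx' : c < ‖f x‖ := hx
        rw [hg_def, Set.indicator_of_mem hx]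
        have h1 : 1 ≤ ‖f x‖ / c := (one_le_div hc).2 hx'.le
        calc ‖f x‖ = c * (‖f x‖ / c) := by field_simp
          _ ≤ c * Phi1 (‖f x‖ / c) := mul_le_mul_of_nonneg_left (le_phi1 h1) hc.le
      · rw [hg_def, Set.indicator_of_notMem hx, norm_zero]
        exact mul_nonneg hc.le (phi1_nonneg (by positivity))
    have key2 : ∀ x, ‖h x‖ ^ 2 ≤ c ^ 2 * Phi1 (‖f x‖ / c) := by
      intro x
      by_cases hx : x ∈ S
      · rw [hh_def, Set.indicator_of_notMem (Set.notMem_compl_iff.2 hx), norm_zero]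
        have : (0:ℝ) ≤ c ^ 2 * Phi1 (‖f x‖ / c) :=
          mul_nonneg (by positivity) (phi1_nonneg (by positivity))
        nlinarith
      · have hx' : ‖f x‖ ≤ c := not_lt.1 hx
        rw [hh_def, Set.indicator_of_mem (Set.mem_compl hx)]
        have ht1 : ‖f x‖ / c ≤ 1 := (div_le_one hc).2 hx'
        rw [Phi1, if_pos ht1]
        have : c ^ 2 * (‖f x‖ / c) ^ 2 = ‖f x‖ ^ 2 := by field_simp
        rw [this]
    have hI1 : ∫⁻ x, ENNReal.ofReal ‖g x‖ ∂μ ≤ ENNReal.ofReal c := by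
      calc ∫⁻ x, ENNReal.ofReal ‖g x‖ ∂μ
          ≤ ∫⁻ x, ENNReal.ofReal (c * Phi1 (‖f x‖ / c)) ∂μ :=
            lintegral_mono fun x => ENNReal.ofReal_le_ofReal (key1 x)
        _ = ENNReal.ofReal c * ∫⁻ x, ENNReal.ofReal (Phi1 (‖f x‖ / c)) ∂μ := by
            simp_rw [ENNReal.ofReal_mul hc.le]
            exact lintegral_const_mul' _ _ ENNReal.ofReal_ne_top
        _ ≤ ENNReal.ofReal c * 1 := mul_le_mul_right hkI _
        _ = ENNReal.ofReal c := mul_one _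
    have hI2 : ∫⁻ x, ENNReal.ofReal (‖h x‖ ^ 2) ∂μ ≤ ENNReal.ofReal (c ^ 2) := by
      calc ∫⁻ x, ENNReal.ofReal (‖h x‖ ^ 2) ∂μ
          ≤ ∫⁻ x, ENNReal.ofReal (c ^ 2 * Phi1 (‖f x‖ / c)) ∂μ :=
            lintegral_mono fun x => ENNReal.ofReal_le_ofReal (key2 x)
        _ = ENNReal.ofReal (c ^ 2) * ∫⁻ x, ENNReal.ofReal (Phi1 (‖f x‖ / c)) ∂μ := by
            simp_rw [ENNReal.ofReal_mul (by positivity : (0:ℝ) ≤ c ^ 2)]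
            exact lintegral_const_mul' _ _ ENNReal.ofReal_ne_top
        _ ≤ ENNReal.ofReal (c ^ 2) * 1 := mul_le_mul_right hkI _
        _ = ENNReal.ofReal (c ^ 2) := mul_one _
    have hgi : Integrable g μ := by
      refine ⟨hgm.aestronglyMeasurable, ?_⟩
      rw [hasFiniteIntegral_iff_norm]
      exact lt_of_le_of_lt hI1 ENNReal.ofReal_lt_top
    have hG : ∫ x, ‖g x‖ ∂μ ≤ c := by
      rw [integral_eq_lintegral_of_nonneg_ae (ae_of_all _ fun x => norm_nonneg _)
        hgm.norm.aestronglyMeasurable]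
      exact ENNReal.toReal_le_of_le_ofReal hc.le hI1
    have hsqm : AEStronglyMeasurable (fun x => ‖h x‖ ^ 2) μ :=
      (hhm.norm.measurable.pow_const 2).aestronglyMeasurable
    have hhsqi : Integrable (fun x => ‖h x‖ ^ 2) μ := by
      refine ⟨hsqm, ?_⟩
      rw [hasFiniteIntegral_iff_norm]
      have heq : (fun x => ENNReal.ofReal ‖‖h x‖ ^ 2‖) =
          fun x => ENNReal.ofReal (‖h x‖ ^ 2) := by
        funext x; rw [Real.norm_of_nonneg (by positivity)]
      exact lt_of_le_of_lt (heq ▸ hI2) ENNReal.ofReal_lt_top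
    have hhl2 : MemLp h 2 μ :=
      (memLp_two_iff_integrable_sq_norm hhm.aestronglyMeasurable).2 hhsqi
    have hH : Real.sqrt (∫ x, ‖h x‖ ^ 2 ∂μ) ≤ c := by
      have h1 : ∫ x, ‖h x‖ ^ 2 ∂μ ≤ c ^ 2 := by
        rw [integral_eq_lintegral_of_nonneg_ae (ae_of_all _ fun x => by positivity) hsqm]
        exact ENNReal.toReal_le_of_le_ofReal (by positivity) hI2
      calc Real.sqrt (∫ x, ‖h x‖ ^ 2 ∂μ) ≤ Real.sqrt (c ^ 2) := Real.sqrt_le_sqrt h1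
        _ = c := Real.sqrt_sq hc.le
    have hfgh : f =ᵐ[μ] g + h := by
      refine ae_of_all _ fun x => ?_
      exact (congrFun (Set.indicator_self_add_compl S f) x).symm
    have hA : sumL1L2 μ f ≤ 2 * k := by
      have hmem : sumL1L2 μ f ≤
          ENNReal.ofReal ((∫ x, ‖g x‖ ∂μ) + Real.sqrt (∫ x, ‖h x‖ ^ 2 ∂μ)) :=
        sInf_le ⟨g, h, hgi, hhl2, hfgh, rfl⟩
      refine hmem.trans ?_
      calc ENNReal.ofReal ((∫ x, ‖g x‖ ∂μ) + Real.sqrt (∫ x, ‖h x‖ ^ 2 ∂μ))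
          ≤ ENNReal.ofReal (c + c) := ENNReal.ofReal_le_ofReal (add_le_add hG hH)
        _ = ENNReal.ofReal c + ENNReal.ofReal c := ENNReal.ofReal_add hc.le hc.le
        _ = k + k := by rw [hc_def, ENNReal.ofReal_toReal hktop]
        _ = 2 * k := (two_mul k).symm
    calc (1 / 2 : ℝ≥0∞) * sumL1L2 μ f ≤ (1 / 2 : ℝ≥0∞) * (2 * k) := mul_le_mul_right hA _
      _ = k := by
          rw [← mul_assoc, one_div, ENNReal.inv_mul_cancel two_ne_zero ENNReal.ofNat_ne_top,
            one_mul]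
  · -- `‖f‖_Φ₁ ≤ 2 A(f)`
    have key : ∀ r : ℝ≥0∞, (∃ g h : X → B, Integrable g μ ∧ MemLp h 2 μ ∧ f =ᵐ[μ] g + h ∧
        r = ENNReal.ofReal ((∫ x, ‖g x‖ ∂μ) + Real.sqrt (∫ x, ‖h x‖ ^ 2 ∂μ))) →
        luxNorm μ f ≤ 2 * r := by
      rintro r ⟨g, h, hgi, hhl2, hfgh, rfl⟩
      set G : ℝ := ∫ x, ‖g x‖ ∂μ with hG_def
      set H : ℝ := Real.sqrt (∫ x, ‖h x‖ ^ 2 ∂μ) with hH_def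
      have hG0 : 0 ≤ G := integral_nonneg fun x => norm_nonneg _
      have hH0 : 0 ≤ H := Real.sqrt_nonneg _
      have hIn : 0 ≤ ∫ x, ‖h x‖ ^ 2 ∂μ := integral_nonneg fun x => by positivity
      have hhsqi : Integrable (fun x => ‖h x‖ ^ 2) μ :=
        (memLp_two_iff_integrable_sq_norm hhl2.aestronglyMeasurable).1 hhl2
      rcases eq_or_lt_of_le (add_nonneg hG0 hH0) with hs0 | hs
      · -- degenerate case : `f = 0` a.e.
        have hG' : G = 0 := by linarith
        have hH' : H = 0 := by linarith
        have hg0 : g =ᵐ[μ] 0 := by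
          have := (integral_eq_zero_iff_of_nonneg (fun x => norm_nonneg (g x))
            hgi.norm).1 hG'
          filter_upwards [this] with x hx
          simpa using hx
        have hh0 : h =ᵐ[μ] 0 := by
          have hint0 : ∫ x, ‖h x‖ ^ 2 ∂μ = 0 :=
            le_antisymm (Real.sqrt_eq_zero'.1 hH') hIn
          have := (integral_eq_zero_iff_of_nonneg (fun x => by positivity :
            ∀ x, (0:ℝ) ≤ ‖h x‖ ^ 2) hhsqi).1 hint0
          filter_upwards [this] with x hx
          have hx' : ‖h x‖ ^ 2 = 0 := hx
          have : ‖h x‖ = 0 := by nlinarith [norm_nonneg (h x)]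
          simpa using this
        have hf0 : f =ᵐ[μ] 0 := by
          refine hfgh.trans ?_
          filter_upwards [hg0, hh0] with x hxg hxh
          have hxg' : g x = 0 := hxg
          have hxh' : h x = 0 := hxh
          simp [hxg', hxh']
        rw [luxNorm_of_ae_zero μ hf0]
        exact zero_le
      · -- main case : `s = G + H > 0`
        have hs2 : (0:ℝ) < 2 * (G + H) := by linarith
        have hfb : ∀ᵐ x ∂μ, ‖f x‖ ≤ ‖g x‖ + ‖h x‖ := by
          filter_upwards [hfgh] with x hx
          rw [hx]
          exact norm_add_le _ _
        have hpt : ∀ᵐ x ∂μ, Phi1 (‖f x‖ / (2 * (G + H))) ≤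
            ‖g x‖ / (G + H) + ‖h x‖ ^ 2 / (4 * (G + H) ^ 2) := by
          filter_upwards [hfb] with x hx
          have hdiv : ‖f x‖ / (2 * (G + H)) ≤
              ‖g x‖ / (2 * (G + H)) + ‖h x‖ / (2 * (G + H)) := by
            rw [← add_div]
            gcongr
          have hmain := phi1_le (by positivity) (by positivity) (by positivity) hdiv
          calc Phi1 (‖f x‖ / (2 * (G + H)))
              ≤ 2 * (‖g x‖ / (2 * (G + H))) + (‖h x‖ / (2 * (G + H))) ^ 2 := hmain
            _ = ‖g x‖ / (G + H) + ‖h x‖ ^ 2 / (4 * (G + H) ^ 2) := by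
                field_simp
                ring
        have hbi : Integrable (fun x => ‖g x‖ / (G + H) + ‖h x‖ ^ 2 / (4 * (G + H) ^ 2)) μ :=
          (hgi.norm.div_const _).add (hhsqi.div_const _)
        have hbint : ∫ x, (‖g x‖ / (G + H) + ‖h x‖ ^ 2 / (4 * (G + H) ^ 2)) ∂μ ≤ 1 := by
          rw [integral_add (hgi.norm.div_const _) (hhsqi.div_const _),
            integral_div, integral_div]
          have hI : ∫ x, ‖h x‖ ^ 2 ∂μ = H ^ 2 := (Real.sq_sqrt hIn).symm
          rw [hI, ← hG_def]
          rw [div_add_div _ _ (ne_of_gt hs) (by positivity), div_le_one (by positivity)]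
          nlinarith [mul_nonneg (mul_nonneg (add_nonneg hG0 hH0) hH0)
            (by linarith : (0:ℝ) ≤ 4 * G + 3 * H)]
        have hlint : ∫⁻ x, ENNReal.ofReal
            (Phi1 (‖f x‖ / (ENNReal.ofReal (2 * (G + H))).toReal)) ∂μ ≤ 1 := by
          rw [ENNReal.toReal_ofReal hs2.le]
          calc ∫⁻ x, ENNReal.ofReal (Phi1 (‖f x‖ / (2 * (G + H)))) ∂μ
              ≤ ∫⁻ x, ENNReal.ofReal
                  (‖g x‖ / (G + H) + ‖h x‖ ^ 2 / (4 * (G + H) ^ 2)) ∂μ := by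
                refine lintegral_mono_ae ?_
                filter_upwards [hpt] with x hx
                exact ENNReal.ofReal_le_ofReal hx
            _ = ENNReal.ofReal
                  (∫ x, (‖g x‖ / (G + H) + ‖h x‖ ^ 2 / (4 * (G + H) ^ 2)) ∂μ) :=
                (ofReal_integral_eq_lintegral_ofReal hbi
                  (ae_of_all _ fun x => by positivity)).symm
            _ ≤ 1 := by
                rw [← ENNReal.ofReal_one]
                exact ENNReal.ofReal_le_ofReal hbint
        have hmem : luxNorm μ f ≤ ENNReal.ofReal (2 * (G + H)) :=
          sInf_le ⟨ENNReal.ofReal_pos.2 hs2, ENNReal.ofReal_ne_top, hlint⟩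
        refine hmem.trans ?_
        rw [ENNReal.ofReal_mul (by norm_num : (0:ℝ) ≤ 2)]
        simp
    have h2 : luxNorm μ f / 2 ≤ sumL1L2 μ f := by
      rw [sumL1L2]
      exact le_sInf fun r hr => ENNReal.div_le_of_le_mul' (key r hr)
    calc luxNorm μ f = luxNorm μ f / 2 * 2 :=
          (ENNReal.div_mul_cancel two_ne_zero ENNReal.ofNat_ne_top).symm
      _ ≤ sumL1L2 μ f * 2 := mul_le_mul_left h2 _
      _ = 2 * sumL1L2 μ f := mul_comm _ _
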